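/- Let Φ₁, …, Φ_m and Φ'₁, …, Φ'_m be correlation matrices with Φ_i and Φ'_i both of size n_i×n_i. If the vector of eigenvalues of the Kronecker product Φ₁⊗Φ₂⊗⋯⊗Φ_m is majorized by the vector of eigenvalues of Φ'₁⊗Φ'₂⊗⋯⊗Φ'_m, then the products of correlation figures satisfy ∏_{i=1}^m c(Φ_i) ≤ ∏_{i=1}^m c(Φ'_i). -/

import Mathlib

open Matrix
open scoped ComplexOrder

noncomputable section

/-- Sum of the `k` largest components of a finite real vector, expressed as the
supremum of sums over subsets of cardinality `k`. -/
def sumKLargest {ι : Type*} [Fintype ι] (a : ι → ℝ) (k : ℕ) : ℝ :=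
  sSup {x : ℝ | ∃ s : Finset ι, s.card = k ∧ x = ∑ i ∈ s, a i}

/-- `a` is majorized by `b`: for every `k`, the sum of the `k` largest
components of `a` is at most that of `b`, and the total sums are equal. -/
def MajorizedBy {ι ι' : Type*} [Fintype ι] [Fintype ι'] (a : ι → ℝ) (b : ι' → ℝ) : Prop :=
  (∀ k : ℕ, k ≤ Fintype.card ι → sumKLargest a k ≤ sumKLargest b k) ∧
    ∑ i, a i = ∑ i, b i

/-- The correlation figure `ζ(Φ) = tr(Φ²)/n²`. -/
def corrFig {ι : Type*} [Fintype ι] (Φ : Matrix ι ι ℂ) : ℝ :=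
  (Matrix.trace (Φ * Φ)).re / (Fintype.card ι : ℝ) ^ 2

/-- `m`-fold Kronecker product of a family of square matrices, realized on the
index type `Π i, Fin (n i)`: the `(x, y)` entry is `∏ i, Φ i (x i) (y i)`. -/
def kronFamily {m : ℕ} {n : Fin m → ℕ}
    (Φ : ∀ i, Matrix (Fin (n i)) (Fin (n i)) ℂ) :
    Matrix (∀ i, Fin (n i)) (∀ i, Fin (n i)) ℂ :=
  Matrix.of fun x y => ∏ i, Φ i (x i) (y i)

/-! ### Auxiliary lemmas -/

/-- For a Hermitian matrix `A`, the trace of `A²` equals the sum of the squares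
of the eigenvalues (as a real number, coerced). -/
lemma trace_sq_eq_sum_sq {N : Type*} [Fintype N] [DecidableEq N]
    {A : Matrix N N ℂ} (hA : A.IsHermitian) :
    Matrix.trace (A * A) = ((∑ i, (hA.eigenvalues i) ^ 2 : ℝ) : ℂ) := by
  set U := (hA.eigenvectorUnitary : Matrix N N ℂ)
  have hU : star U * U = 1 := Unitary.coe_star_mul_self hA.eigenvectorUnitary
  have hU' : ∀ X : Matrix N N ℂ, star U * (U * X) = X := by
    intro X; rw [← Matrix.mul_assoc, hU, Matrix.one_mul]
  have hs := hA.spectral_theorem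
  rw [Unitary.conjStarAlgAut_apply] at hs
  set D := Matrix.diagonal (RCLike.ofReal ∘ hA.eigenvalues : N → ℂ)
  calc Matrix.trace (A * A) = Matrix.trace ((U * D * star U) * (U * D * star U)) := by rw [← hs]
    _ = Matrix.trace (D * D) := by
        rw [Matrix.trace_mul_comm]
        simp only [Matrix.mul_assoc, hU']
        rw [Matrix.trace_mul_comm]
        simp only [Matrix.mul_assoc, hU']
        rw [hU, Matrix.mul_one]
    _ = ((∑ i, (hA.eigenvalues i) ^ 2 : ℝ) : ℂ) := by
        rw [Matrix.diagonal_mul_diagonal, Matrix.trace_diagonal]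
        push_cast
        simp [sq]

/-- The trace of the square of a Kronecker product is the product of the traces
of the squares of the factors. -/
lemma trace_kron_sq {m : ℕ} {n : Fin m → ℕ}
    (Φ : ∀ i, Matrix (Fin (n i)) (Fin (n i)) ℂ) :
    Matrix.trace (kronFamily Φ * kronFamily Φ) = ∏ i, Matrix.trace (Φ i * Φ i) := by
  have h1 : ∀ i, Matrix.trace (Φ i * Φ i) = ∑ a, ∑ b, Φ i a b * Φ i b a := by
    intro i; simp [Matrix.trace, Matrix.mul_apply, Matrix.diag]
  have h2 : Matrix.trace (kronFamily Φ * kronFamily Φ)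
      = ∑ x : ∀ i, Fin (n i), ∑ y : ∀ i, Fin (n i), ∏ i, (Φ i (x i) (y i) * Φ i (y i) (x i)) := by
    simp [kronFamily, Matrix.trace, Matrix.mul_apply, Matrix.diag, Finset.prod_mul_distrib]
  rw [h2]
  simp_rw [h1]
  rw [Fintype.prod_sum (f := fun i a => ∑ b, Φ i a b * Φ i b a)]
  exact Finset.sum_congr rfl fun x _ => by
    rw [Fintype.prod_sum (f := fun i b => Φ i (x i) b * Φ i b (x i))]

/-- Abel summation: sums of squares are Schur convex with respect to prefix
domination (with the first sequence sorted in decreasing order). -/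
lemma sumsq_le_of_prefix (N : ℕ) (a b : ℕ → ℝ)
    (ha : ∀ i j, i ≤ j → j < N → a j ≤ a i)
    (hpre : ∀ k, k ≤ N → ∑ i ∈ Finset.range k, a i ≤ ∑ i ∈ Finset.range k, b i)
    (heq : ∑ i ∈ Finset.range N, a i = ∑ i ∈ Finset.range N, b i) :
    ∑ i ∈ Finset.range N, (a i) ^ 2 ≤ ∑ i ∈ Finset.range N, (b i) ^ 2 := by
  have key : 0 ≤ ∑ i ∈ Finset.range N, a i * (b i - a i) := by
    have habel := Finset.sum_range_by_parts a (fun i => b i - a i) N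
    simp only [smul_eq_mul] at habel
    rw [habel]
    have hGN : ∑ i ∈ Finset.range N, (b i - a i) = 0 := by
      rw [Finset.sum_sub_distrib, sub_eq_zero]; exact heq.symm
    rw [hGN, mul_zero, zero_sub, neg_nonneg]
    apply Finset.sum_nonpos
    intro i hi
    rw [Finset.mem_range] at hi
    have hi1 : i + 1 ≤ N := by omega
    have h1 : a (i + 1) - a i ≤ 0 := by
      have := ha i (i + 1) (by omega) (by omega)
      linarith
    have h2 : 0 ≤ ∑ j ∈ Finset.range (i + 1), (b j - a j) := by
      rw [Finset.sum_sub_distrib, sub_nonneg]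
      exact hpre (i + 1) hi1
    exact mul_nonpos_of_nonpos_of_nonneg h1 h2
  have h3 : ∑ i ∈ Finset.range N, ((a i) ^ 2 + 2 * (a i * (b i - a i)))
      ≤ ∑ i ∈ Finset.range N, (b i) ^ 2 := by
    apply Finset.sum_le_sum
    intro i _
    nlinarith [sq_nonneg (b i - a i)]
  rw [Finset.sum_add_distrib, ← Finset.mul_sum] at h3
  linarith

/-- Any sum over a `k`-element subset of `range N` of a sequence that is
decreasing on `range N` is at most the sum of the first `k` terms. -/
lemma subset_sum_le (N k : ℕ) (A : ℕ → ℝ)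
    (ha : ∀ i j, i ≤ j → j < N → A j ≤ A i)
    (s : Finset ℕ) (hs : s ⊆ Finset.range N) (hcard : s.card = k) :
    ∑ i ∈ s, A i ≤ ∑ i ∈ Finset.range k, A i := by
  set f := s.orderEmbOfFin hcard with hf
  have himg : Finset.image f Finset.univ = s := by
    apply Finset.eq_of_subset_of_card_le
    · intro x hx
      simp only [Finset.mem_image] at hx
      obtain ⟨j, _, rfl⟩ := hx
      exact s.orderEmbOfFin_mem hcard j
    · rw [hcard, Finset.card_image_of_injective _ f.injective, Finset.card_univ,
        Fintype.card_fin]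
  have hge : ∀ (jv : ℕ) (h : jv < k), jv ≤ f ⟨jv, h⟩ := by
    intro jv
    induction jv with
    | zero => exact fun _ => Nat.zero_le _
    | succ j ih =>
      intro h
      have hj : j < k := by omega
      have hlt : f ⟨j, hj⟩ < f ⟨j + 1, h⟩ := f.strictMono (by simp [Fin.lt_def])
      have := ih hj
      omega
  calc ∑ i ∈ s, A i = ∑ j : Fin k, A (f j) := by
        rw [← himg, Finset.sum_image (fun x _ y _ h => f.injective h)]
    _ ≤ ∑ j : Fin k, A (j : ℕ) := by
        apply Finset.sum_le_sum
        intro j _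
        apply ha _ _ (hge j.1 j.2)
        have : f j ∈ s := s.orderEmbOfFin_mem hcard j
        exact Finset.mem_range.mp (hs this)
    _ = ∑ i ∈ Finset.range k, A i := Fin.sum_univ_eq_sum_range A k

/-- Every finite real vector has a sorted (decreasing) representative on `ℕ`
whose prefix sums compute `sumKLargest` and whose sums and sums of squares
agree with the original vector. -/
lemma exists_sorted_rep {ι : Type*} [Fintype ι] (a : ι → ℝ) :
    ∃ A : ℕ → ℝ,
      (∀ i j, i ≤ j → j < Fintype.card ι → A j ≤ A i) ∧
      (∀ k, k ≤ Fintype.card ι → sumKLargest a k = ∑ i ∈ Finset.range k, A i) ∧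
      (∑ i, a i = ∑ i ∈ Finset.range (Fintype.card ι), A i) ∧
      (∑ i, (a i) ^ 2 = ∑ i ∈ Finset.range (Fintype.card ι), (A i) ^ 2) := by
  classical
  set N := Fintype.card ι with hN
  obtain e := (Fintype.equivFin ι).symm
  set σ := Tuple.sort (fun i : Fin N => -(a (e i))) with hσ
  set g : Fin N → ℝ := fun i => a (e (σ i)) with hg
  have hganti : ∀ i j : Fin N, i ≤ j → g j ≤ g i := by
    intro i j hij
    have := Tuple.monotone_sort (fun i : Fin N => -(a (e i))) hij
    simp only [Function.comp_apply] at this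
    simpa [hg] using neg_le_neg this
  set A : ℕ → ℝ := fun i => if h : i < N then g ⟨i, h⟩ else 0 with hA
  have hApos : ∀ (i : ℕ) (h : i < N), A i = g ⟨i, h⟩ := fun i h => dif_pos h
  have hAanti : ∀ i j, i ≤ j → j < N → A j ≤ A i := by
    intro i j hij hjN
    rw [hApos j hjN, hApos i (lt_of_le_of_lt hij hjN)]
    exact hganti _ _ hij
  have hsum : ∀ F : ℝ → ℝ, ∑ i, F (a i) = ∑ i ∈ Finset.range N, F (A i) := by
    intro F
    rw [← Fin.sum_univ_eq_sum_range (fun i => F (A i)) N]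
    rw [← Equiv.sum_comp e (fun x => F (a x)), ← Equiv.sum_comp σ (fun j => F (a (e j)))]
    exact Finset.sum_congr rfl fun j _ => by rw [hApos j.1 j.2]
  refine ⟨A, hAanti, ?_, by simpa using hsum (fun x => x), by simpa using hsum (fun x => x ^ 2)⟩
  intro k hk
  have hcinj : Function.Injective (fun m : Fin k => e (σ (Fin.castLE hk m))) :=
    fun x y h => Fin.castLE_injective hk (σ.injective (e.injective h))
  have hmem : (∑ m ∈ Finset.range k, A m) ∈
      {x : ℝ | ∃ s : Finset ι, s.card = k ∧ x = ∑ i ∈ s, a i} := by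
    refine ⟨Finset.image (fun m : Fin k => e (σ (Fin.castLE hk m))) Finset.univ, ?_, ?_⟩
    · rw [Finset.card_image_of_injective _ hcinj, Finset.card_univ, Fintype.card_fin]
    · rw [Finset.sum_image (fun x _ y _ h => hcinj h),
        ← Fin.sum_univ_eq_sum_range A k]
      apply Finset.sum_congr rfl
      intro m _
      rw [hApos m.1 (lt_of_lt_of_le m.2 hk)]
      rfl
  have hfin : {x : ℝ | ∃ s : Finset ι, s.card = k ∧ x = ∑ i ∈ s, a i}.Finite := by
    apply Set.Finite.subset (Finset.finite_toSet
      ((Finset.univ : Finset (Finset ι)).image (fun s => ∑ i ∈ s, a i)))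
    rintro x ⟨s, _, rfl⟩
    simp only [Finset.coe_image, Set.mem_image, Finset.mem_coe]
    exact ⟨s, by simp⟩
  apply le_antisymm
  · apply csSup_le ⟨_, hmem⟩
    rintro x ⟨s, hsc, rfl⟩
    set t := s.image (fun x => ((σ.symm (e.symm x)) : ℕ)) with ht
    have hinj : Function.Injective (fun x : ι => ((σ.symm (e.symm x)) : ℕ)) :=
      fun x y h => e.symm.injective (σ.symm.injective (Fin.val_injective h))
    have htc : t.card = k := by rw [ht, Finset.card_image_of_injective _ hinj, hsc]
    have hts : t ⊆ Finset.range N := by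
      intro x hx
      simp only [ht, Finset.mem_image] at hx
      obtain ⟨y, _, rfl⟩ := hx
      exact Finset.mem_range.mpr (σ.symm (e.symm y)).2
    refine le_trans (le_of_eq ?_) (subset_sum_le N k A hAanti t hts htc)
    rw [ht, Finset.sum_image (fun x _ y _ h => hinj h)]
    apply Finset.sum_congr rfl
    intro x _
    rw [hApos _ (σ.symm (e.symm x)).2]
    simp [hg]
  · exact le_csSup hfin.bddAbove hmem

/-- Majorization implies domination of sums of squares (Schur convexity of the
sum of squares). -/
lemma sumsq_le_sumsq_of_majorized {ι : Type*} [Fintype ι] (a b : ι → ℝ)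
    (h : MajorizedBy a b) : ∑ i, (a i) ^ 2 ≤ ∑ i, (b i) ^ 2 := by
  obtain ⟨A, hAa, hAk, hAs, hAsq⟩ := exists_sorted_rep a
  obtain ⟨B, _, hBk, hBs, hBsq⟩ := exists_sorted_rep b
  rw [hAsq, hBsq]
  apply sumsq_le_of_prefix (Fintype.card ι) A B hAa
  · intro k hk
    rw [← hAk k hk, ← hBk k hk]
    exact h.1 k hk
  · rw [← hAs, ← hBs]
    exact h.2

/-- The product of correlation figures equals the sum of squared eigenvalues of
the Kronecker product, divided by the square of the total dimension. -/
lemma prod_corrFig_eq {m : ℕ} {n : Fin m → ℕ}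
    (Ψ : ∀ i, Matrix (Fin (n i)) (Fin (n i)) ℂ)
    (hH : ∀ i, (Ψ i).IsHermitian)
    (hKΨ : (kronFamily Ψ).IsHermitian) :
    ∏ i, corrFig (Ψ i) =
      (∑ j, hKΨ.eigenvalues j ^ 2) / ((Fintype.card (∀ i, Fin (n i)) : ℝ)) ^ 2 := by
  have h1 : ∀ i, corrFig (Ψ i) =
      (∑ j, ((hH i).eigenvalues j) ^ 2) / ((n i : ℝ)) ^ 2 := by
    intro i
    unfold corrFig
    rw [trace_sq_eq_sum_sq (hH i), Complex.ofReal_re, Fintype.card_fin]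
  have h2 : (∏ i, ∑ j, ((hH i).eigenvalues j) ^ 2) = ∑ j, hKΨ.eigenvalues j ^ 2 := by
    have h3 : ((∏ i, ∑ j, ((hH i).eigenvalues j) ^ 2 : ℝ) : ℂ)
        = ((∑ j, hKΨ.eigenvalues j ^ 2 : ℝ) : ℂ) := by
      rw [← trace_sq_eq_sum_sq hKΨ, trace_kron_sq Ψ]
      push_cast
      exact Finset.prod_congr rfl fun i _ => by
        rw [trace_sq_eq_sum_sq (hH i)]; push_cast; ring
    exact_mod_cast h3
  simp_rw [h1]
  rw [Finset.prod_div_distrib, h2]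
  rw [Finset.prod_pow]
  congr 2
  rw [Fintype.card_pi]
  push_cast
  simp

theorem corrFig_prod_schur_monotone
    (m : ℕ) (n : Fin m → ℕ)
    (Φ Φ' : ∀ i, Matrix (Fin (n i)) (Fin (n i)) ℂ)
    (hΦ : ∀ i, (Φ i).PosSemidef) (hΦ' : ∀ i, (Φ' i).PosSemidef)
    (hd : ∀ i j, Φ i j j = 1) (hd' : ∀ i j, Φ' i j j = 1)
    (hK : (kronFamily Φ).IsHermitian) (hK' : (kronFamily Φ').IsHermitian)
    (hmaj : MajorizedBy hK.eigenvalues hK'.eigenvalues) :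
    ∏ i, corrFig (Φ i) ≤ ∏ i, corrFig (Φ' i) := by
  rw [prod_corrFig_eq Φ (fun i => (hΦ i).1) hK, prod_corrFig_eq Φ' (fun i => (hΦ' i).1) hK']
  have hsq := sumsq_le_sumsq_of_majorized _ _ hmaj
  exact div_le_div_of_nonneg_right hsq (by positivity)

end
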